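/- (Multiplication formula at s = −1) For every natural number q ≥ 1 and every real number x with 0 < x ≤ 1, ζ'(−1, x) − (1/2) · B₂(x) · log q = q · Σ_{r=0}^{q−1} ζ'(−1, (r + x)/q), where B₂(x) = x² − x + 1/6 is the second Bernoulli polynomial. -/

import Mathlib

open HurwitzZeta

open Complex Set Finset

lemma quot_cpow (a b : ℝ) (ha : 0 ≤ a) (hb : 0 < b) (s : ℂ) :
    ((a / b : ℝ) : ℂ) ^ s = (a : ℂ) ^ s / (b : ℂ) ^ s := by
  have hbne : ((b : ℝ) : ℂ) ^ s ≠ 0 := by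
    intro h
    rw [cpow_eq_zero_iff] at h
    exact ofReal_ne_zero.mpr hb.ne' h.1
  rw [eq_div_iff hbne, ← mul_cpow_ofReal_nonneg (by positivity) hb.le,
    ← ofReal_mul, div_mul_cancel₀ _ hb.ne']

lemma mult_formula_of_one_lt_re (q : ℕ) (hq : 1 ≤ q) (x : ℝ) (hx0 : 0 < x) (hx1 : x ≤ 1)
    {s : ℂ} (hs : 1 < s.re) :
    ∑ r ∈ Finset.range q, hurwitzZeta ((((r : ℝ) + x) / q : ℝ) : UnitAddCircle) s
      = (q : ℂ) ^ s * hurwitzZeta (x : UnitAddCircle) s := by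
  haveI : NeZero q := ⟨by omega⟩
  have hq0 : (0 : ℝ) < q := by exact_mod_cast hq
  have hqC : ((q : ℝ) : ℂ) ≠ 0 := ofReal_ne_zero.mpr hq0.ne'
  set g : ℕ → ℂ := fun n => 1 / ((n : ℂ) + (x : ℂ)) ^ s with hg
  have h0 : HasSum g (hurwitzZeta (x : UnitAddCircle) s) :=
    hasSum_hurwitzZeta_of_one_lt_re ⟨hx0.le, hx1⟩ hs
  -- per-residue-class sums
  have key : ∀ r : ℕ, r < q →
      HasSum (fun m : ℕ => g (r + q * m))
        (((q : ℝ) : ℂ) ^ (-s) * hurwitzZeta ((((r : ℝ) + x) / q : ℝ) : UnitAddCircle) s) := by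
    intro r hr
    have ha : ((r : ℝ) + x) / q ∈ Set.Icc (0 : ℝ) 1 := by
      constructor
      · positivity
      · rw [div_le_one hq0]
        have : (r : ℝ) + 1 ≤ q := by exact_mod_cast hr
        linarith
    have h1 := hasSum_hurwitzZeta_of_one_lt_re ha hs
    have heq : ∀ m : ℕ, 1 / ((m : ℂ) + ((((r : ℝ) + x) / q : ℝ) : ℂ)) ^ s
        = ((q : ℝ) : ℂ) ^ s * g (r + q * m) := by
      intro m
      have hrwR : (m : ℝ) + ((r : ℝ) + x) / q = (((r + q * m : ℕ) : ℝ) + x) / q := by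
        field_simp
        push_cast
        ring
      have hrw : ((m : ℂ) + ((((r : ℝ) + x) / q : ℝ) : ℂ))
          = ((((r + q * m : ℕ) + x) / q : ℝ) : ℂ) := by
        rw [show (m : ℂ) = ((m : ℝ) : ℂ) by norm_cast, ← ofReal_add, hrwR]
      rw [hrw, quot_cpow _ _ (by positivity) hq0]
      have hqs : ((q : ℝ) : ℂ) ^ s ≠ 0 := by
        intro h
        rw [cpow_eq_zero_iff] at h
        exact hqC h.1
      have hnum : ((((r + q * m : ℕ) : ℝ) + x : ℝ) : ℂ) = (((r + q * m : ℕ) : ℂ) + (x : ℂ)) := by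
        push_cast; ring
      rw [hnum, hg]
      field_simp
    simp only [heq] at h1
    have h2 := h1.mul_left (((q : ℝ) : ℂ) ^ (-s))
    simpa only [← mul_assoc, ← cpow_add _ _ hqC, neg_add_cancel, cpow_zero, one_mul] using h2
  -- assemble
  have hres := Nat.sumByResidueClasses h0.summable q
  rw [h0.tsum_eq] at hres
  have hterm : ∀ j : ZMod q, ∑' m, g (j.val + q * m)
      = ((q : ℝ) : ℂ) ^ (-s) * hurwitzZeta ((((j.val : ℝ) + x) / q : ℝ) : UnitAddCircle) s :=
    fun j => (key j.val (ZMod.val_lt j)).tsum_eq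
  simp only [hterm] at hres
  have hzr : ∑ j : ZMod q, ((q : ℝ) : ℂ) ^ (-s)
        * hurwitzZeta ((((j.val : ℝ) + x) / q : ℝ) : UnitAddCircle) s
      = ∑ r ∈ Finset.range q, ((q : ℝ) : ℂ) ^ (-s)
        * hurwitzZeta ((((r : ℝ) + x) / q : ℝ) : UnitAddCircle) s := by
    refine Finset.sum_nbij' (fun j => j.val) (fun r => (r : ZMod q)) ?_ ?_ ?_ ?_ ?_
    · intro j _; exact Finset.mem_range.mpr (ZMod.val_lt j)
    · intro r _; exact Finset.mem_univ _
    · intro j _; exact ZMod.natCast_zmod_val j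
    · intro r hr; exact ZMod.val_natCast_of_lt (Finset.mem_range.mp hr)
    · intro j _; rfl
  rw [hzr, ← Finset.mul_sum] at hres
  have : (q : ℂ) = ((q : ℝ) : ℂ) := by push_cast; rfl
  rw [this, hres, ← mul_assoc, ← cpow_add _ _ hqC, add_neg_cancel, cpow_zero, one_mul]

lemma mult_formula_ne_one (q : ℕ) (hq : 1 ≤ q) (x : ℝ) (hx0 : 0 < x) (hx1 : x ≤ 1)
    {s : ℂ} (hs : s ≠ 1) :
    ∑ r ∈ Finset.range q, hurwitzZeta ((((r : ℝ) + x) / q : ℝ) : UnitAddCircle) s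
      = (q : ℂ) ^ s * hurwitzZeta (x : UnitAddCircle) s := by
  have hq0 : (q : ℂ) ≠ 0 := Nat.cast_ne_zero.mpr (by omega)
  set U : Set ℂ := {1}ᶜ with hU
  have hUo : IsOpen U := isOpen_compl_singleton
  have hf : AnalyticOnNhd ℂ
      (fun s => ∑ r ∈ Finset.range q,
        hurwitzZeta ((((r : ℝ) + x) / q : ℝ) : UnitAddCircle) s) U := by
    refine DifferentiableOn.analyticOnNhd (fun u hu => ?_) hUo
    exact (DifferentiableAt.fun_sum fun r _ =>
      differentiableAt_hurwitzZeta _ hu).differentiableWithinAt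
  have hg : AnalyticOnNhd ℂ
      (fun s => (q : ℂ) ^ s * hurwitzZeta (x : UnitAddCircle) s) U := by
    refine DifferentiableOn.analyticOnNhd (fun u hu => ?_) hUo
    exact (((differentiableAt_id).const_cpow (Or.inl hq0)).mul
      (differentiableAt_hurwitzZeta _ hu)).differentiableWithinAt
  have hUc : IsPreconnected U :=
    (isConnected_compl_singleton_of_one_lt_rank (by simp) _).isPreconnected
  have hUmem : (2 : ℂ) ∈ U := by simp [hU]
  have hmem' : s ∈ U := hs
  refine hf.eqOn_of_preconnected_of_eventuallyEq hg hUc hUmem ?_ hmem'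
  have hV : {z : ℂ | 1 < z.re} ∈ nhds (2 : ℂ) :=
    (continuous_re.isOpen_preimage _ isOpen_Ioi).mem_nhds (by simp)
  filter_upwards [hV] with z hz
  exact mult_formula_of_one_lt_re q hq x hx0 hx1 hz

lemma bernoulli_two_eval (z : ℂ) :
    ((Polynomial.bernoulli 2).map (algebraMap ℚ ℂ)).eval z = z ^ 2 - z + 1/6 := by
  have : bernoulli 2 = 1/6 := by
    rw [bernoulli_eq_bernoulli'_of_ne_one (by norm_num), bernoulli'_two]
  simp [Polynomial.bernoulli, Finset.sum_range_succ, this]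
  ring

theorem hurwitzZeta_deriv_neg_one_multiplication (q : ℕ) (hq : 1 ≤ q)
    (x : ℝ) (hx0 : 0 < x) (hx1 : x ≤ 1) :
    deriv (fun s => hurwitzZeta (x : UnitAddCircle) s) (-1)
        - (1/2 : ℂ) * ((x : ℂ) ^ 2 - (x : ℂ) + 1/6) * (Real.log q : ℂ) =
      (q : ℂ) * ∑ r ∈ Finset.range q,
        deriv (fun s => hurwitzZeta ((((r : ℝ) + x) / q : ℝ) : UnitAddCircle) s) (-1) := by
  have hq0 : (q : ℂ) ≠ 0 := Nat.cast_ne_zero.mpr (by omega)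
  have hne : (-1 : ℂ) ∈ ({1} : Set ℂ)ᶜ := by norm_num
  have heq : (fun s => ∑ r ∈ Finset.range q,
        hurwitzZeta ((((r : ℝ) + x) / q : ℝ) : UnitAddCircle) s)
      =ᶠ[nhds (-1 : ℂ)] (fun s => (q : ℂ) ^ s * hurwitzZeta (x : UnitAddCircle) s) := by
    filter_upwards [isOpen_compl_singleton.mem_nhds hne] with z hz
    exact mult_formula_ne_one q hq x hx0 hx1 hz
  have hd := heq.deriv_eq
  rw [deriv_fun_sum (fun r _ => differentiableAt_hurwitzZeta _ (by norm_num))] at hd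
  set D := deriv (fun s => hurwitzZeta (x : UnitAddCircle) s) (-1) with hD
  have h1 : HasDerivAt (fun s : ℂ => (q : ℂ) ^ s)
      ((q : ℂ) ^ (-1 : ℂ) * Complex.log q * 1) (-1) :=
    (hasDerivAt_id _).const_cpow (Or.inl hq0)
  have h2 : HasDerivAt (fun s => hurwitzZeta (x : UnitAddCircle) s) D (-1) :=
    (differentiableAt_hurwitzZeta _ (by norm_num)).hasDerivAt
  have h3 := (h1.fun_mul h2).deriv
  rw [hd, h3]
  have hZ : hurwitzZeta (x : UnitAddCircle) (-1)
      = -1 / 2 * ((x : ℂ) ^ 2 - (x : ℂ) + 1/6) := by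
    have := hurwitzZeta_neg_nat (k := 1) one_ne_zero ⟨hx0.le, hx1⟩
    rw [show (-(1:ℕ) : ℂ) = (-1 : ℂ) by norm_num] at this
    rw [this, bernoulli_two_eval]
    norm_num
  rw [hZ, cpow_neg_one, ← Complex.natCast_log]
  field_simp
  ring
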